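/- Let S = (s_{ij}) be symmetric nonnegative with zero diagonal, λ ∈ [0, 1/2], and F(A) = ∑_{i∈A}∑_{j∈V} s_{ij} − λ∑_{i∈A}∑_{j∈A} s_{ij}. Then there exist jointly distributed discrete random variables X_1, ..., X_n such that H(X_A) = F(A) for all A ⊆ [n]; i.e., the monotone graph-cut function is entropic. -/

import Mathlib

open Finset

/-- Shannon entropy of a random variable `X` on a finite probability space with pmf `p`. -/
noncomputable def entropy {Ω : Type} [Fintype Ω] {S : Type} (p : Ω → ℝ) (X : Ω → S) : ℝ := by
  classical
  exact ∑ s ∈ Finset.univ.image X,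
    Real.negMulLog (∑ ω ∈ Finset.univ.filter (fun ω => X ω = s), p ω)

/-- `p` is a probability mass function. -/
def IsPMF {Ω : Type} [Fintype Ω] (p : Ω → ℝ) : Prop :=
  (∀ ω, 0 ≤ p ω) ∧ ∑ ω, p ω = 1

/-- Mutual independence of a finite family of random variables. -/
def MutuallyIndep {Ω : Type} [Fintype Ω] {ι : Type} [Fintype ι] {S : Type}
    (p : Ω → ℝ) (Z : ι → Ω → S) : Prop := by
  classical
  exact ∀ s : ι → S,
    (∑ ω ∈ Finset.univ.filter (fun ω => ∀ u, Z u ω = s u), p ω) =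
      ∏ u, ∑ ω ∈ Finset.univ.filter (fun ω => Z u ω = s u), p ω

/-- A set function on `[n]` is entropic if it is the joint-entropy function of
jointly distributed discrete random variables. -/
def IsEntropic {n : ℕ} (f : Finset (Fin n) → ℝ) : Prop :=
  ∃ (N : ℕ) (S : Type) (p : Fin N → ℝ) (X : Fin n → Fin N → S),
    IsPMF p ∧ ∀ A : Finset (Fin n), f A = entropy p (fun ω => fun i : A => X i.1 ω)


-- restatement with arbitrary instances
lemma entropy_def {Ω S : Type} [Fintype Ω] [DecidableEq S] [DecidableEq Ω] (p : Ω → ℝ) (X : Ω → S) :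
    entropy p X = ∑ s ∈ Finset.univ.image X,
      Real.negMulLog (∑ ω ∈ Finset.univ.filter (fun ω => X ω = s), p ω) := by
  unfold entropy
  congr!

-- existence of pmf with given entropy
lemma exists_pmf_entropy (M : ℕ) (h : ℝ) (h0 : 0 ≤ h) (hle : h ≤ Real.log (M + 1)) :
    ∃ q : Fin (M + 1) → ℝ,
      (∀ i, 0 ≤ q i) ∧ ∑ i, q i = 1 ∧ ∑ i, Real.negMulLog (q i) = h := by
  set c : ℝ := (M : ℝ) + 1 with hc
  have hcpos : 0 < c := by positivity
  set f : ℝ → ℝ := fun t => Real.negMulLog (1 - t * M / c) + M * Real.negMulLog (t / c) with hf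
  have hcont : Continuous f := by fun_prop
  have hf0 : f 0 = 0 := by simp [hf]
  have hf1 : f 1 = Real.log c := by
    have h1 : (1 : ℝ) - 1 * M / c = 1 / c := by rw [hc]; field_simp; ring
    have h2 : Real.negMulLog (1 / c) = (1 / c) * Real.log c := by
      rw [Real.negMulLog, one_div, Real.log_inv]; ring
    simp only [hf, h1, h2]
    field_simp
    rw [hc]; ring
  have hmem : h ∈ Set.Icc (f 0) (f 1) := by
    rw [hf0, hf1]; exact ⟨h0, hle⟩
  have := intermediate_value_Icc (by norm_num : (0:ℝ) ≤ 1) hcont.continuousOn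
  obtain ⟨t, ht, hft⟩ := this hmem
  obtain ⟨ht0, ht1⟩ := ht
  refine ⟨fun i => if i = 0 then 1 - t * M / c else t / c, ?_, ?_, ?_⟩
  · intro i
    dsimp only
    by_cases hi : i = 0
    · rw [if_pos hi]
      have : t * M ≤ c := by
        calc t * M ≤ 1 * M := by apply mul_le_mul_of_nonneg_right ht1 (by positivity)
        _ ≤ c := by rw [one_mul, hc]; linarith
      have := div_le_one_of_le₀ this hcpos.le
      linarith
    · rw [if_neg hi]
      positivity
  · rw [Fin.sum_univ_succ]
    simp only [if_pos rfl, Fin.succ_ne_zero, if_neg, ite_false, if_true]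
    rw [Finset.sum_const, Finset.card_univ, Fintype.card_fin, nsmul_eq_mul]
    field_simp
    ring
  · rw [Fin.sum_univ_succ]
    simp only [if_pos rfl, Fin.succ_ne_zero, ite_false]
    rw [Finset.sum_const, Finset.card_univ, Fintype.card_fin, nsmul_eq_mul]
    exact hft

-- product of ite with zero
lemma prod_ite_all {ι : Type} [Fintype ι] (P : ι → Prop) [DecidablePred P]
    (a : ι → ℝ) :
    (∏ v, if P v then a v else 0) = if (∀ v, P v) then ∏ v, a v else 0 := by
  by_cases h : ∀ v, P v
  · rw [if_pos h]
    exact Finset.prod_congr rfl (fun v _ => if_pos (h v))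
  · rw [if_neg h]
    push_neg at h
    obtain ⟨v, hv⟩ := h
    exact Finset.prod_eq_zero (Finset.mem_univ v) (if_neg hv)

-- key entropy additivity for product pmfs
lemma key_sum (t : ℕ) {κ : Type} [Fintype κ] (Q : Fin t → κ → ℝ)
    (h1 : ∀ u, ∑ x, Q u x = 1) :
    ∑ g : Fin t → κ, Real.negMulLog (∏ u, Q u (g u)) = ∑ u, ∑ x, Real.negMulLog (Q u x) := by
  induction t with
  | zero => simp
  | succ m ih =>
    have hsum : ∀ (R : (Fin (m+1) → κ) → ℝ),
        ∑ g : Fin (m+1) → κ, R g = ∑ a : κ, ∑ g : Fin m → κ, R (Fin.cons (α := fun _ => κ) a g) := by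
      intro R
      rw [← Equiv.sum_comp (Fin.consEquiv (fun _ => κ)) R, Fintype.sum_prod_type]
      rfl
    rw [hsum]
    have hprod : ∀ (a : κ) (g : Fin m → κ),
        (∏ u, Q u (Fin.cons (α := fun _ => κ) a g u)) = Q 0 a * ∏ u : Fin m, Q u.succ (g u) := by
      intro a g
      rw [Fin.prod_univ_succ]
      simp
    have htail : ∑ g : Fin m → κ, ∏ u : Fin m, Q u.succ (g u) = 1 := by
      rw [← Fintype.prod_sum]
      simp [h1]
    calc ∑ a : κ, ∑ g : Fin m → κ, Real.negMulLog (∏ u, Q u (Fin.cons (α := fun _ => κ) a g u))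
        = ∑ a : κ, ∑ g : Fin m → κ,
            ((∏ u : Fin m, Q u.succ (g u)) * Real.negMulLog (Q 0 a)
              + Q 0 a * Real.negMulLog (∏ u : Fin m, Q u.succ (g u))) := by
          refine Finset.sum_congr rfl fun a _ => Finset.sum_congr rfl fun g _ => ?_
          rw [hprod, Real.negMulLog_mul]
      _ = ∑ a : κ, (Real.negMulLog (Q 0 a)
              + Q 0 a * ∑ g : Fin m → κ, Real.negMulLog (∏ u : Fin m, Q u.succ (g u))) := by
          refine Finset.sum_congr rfl fun a _ => ?_
          rw [Finset.sum_add_distrib, ← Finset.sum_mul, htail, one_mul, ← Finset.mul_sum]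
      _ = ∑ u, ∑ x, Real.negMulLog (Q u x) := by
          rw [Finset.sum_add_distrib, ← Finset.sum_mul, h1 0, one_mul,
            ih (fun u => Q u.succ) (fun u => h1 u.succ), Fin.sum_univ_succ]

-- entropy as a sum over a Fintype codomain
lemma entropy_eq_sum_fintype {Ω S : Type} [Fintype Ω] [Fintype S] [DecidableEq S]
    (p : Ω → ℝ) (X : Ω → S) :
    entropy p X = ∑ s : S,
      Real.negMulLog (∑ ω ∈ Finset.univ.filter (fun ω => X ω = s), p ω) := by
  classical
  rw [entropy_def]
  refine Finset.sum_subset (Finset.subset_univ _) (fun s _ hs => ?_)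
  have : Finset.univ.filter (fun ω => X ω = s) = ∅ := by
    rw [Finset.filter_eq_empty_iff]
    intro ω _ hX
    exact hs (hX ▸ Finset.mem_image_of_mem X (Finset.mem_univ ω))
  rw [this, Finset.sum_empty, Real.negMulLog_zero]

-- entropy only depends on the fiber partition
lemma entropy_congr {Ω S S' : Type} [Fintype Ω] (p : Ω → ℝ) (X : Ω → S) (Y : Ω → S')
    (h : ∀ ω ω', X ω = X ω' ↔ Y ω = Y ω') : entropy p X = entropy p Y := by
  classical
  rcases isEmpty_or_nonempty Ω with hΩ | hΩ
  · rw [entropy_def, entropy_def]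
    have : (Finset.univ : Finset Ω) = ∅ := Finset.univ_eq_empty
    simp [this]
  · obtain ⟨ω0⟩ := hΩ
    set φ : S → Ω := fun a => if hex : ∃ ω, X ω = a then hex.choose else ω0 with hφ
    set ψ : S' → Ω := fun b => if hex : ∃ ω, Y ω = b then hex.choose else ω0 with hψ
    have hφspec : ∀ a ∈ Finset.univ.image X, X (φ a) = a := by
      intro a ha
      obtain ⟨ω, _, hω⟩ := Finset.mem_image.mp ha
      have hex : ∃ ω, X ω = a := ⟨ω, hω⟩
      simp only [hφ, dif_pos hex]
      exact hex.choose_spec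
    have hψspec : ∀ b ∈ Finset.univ.image Y, Y (ψ b) = b := by
      intro b hb
      obtain ⟨ω, _, hω⟩ := Finset.mem_image.mp hb
      have hex : ∃ ω, Y ω = b := ⟨ω, hω⟩
      simp only [hψ, dif_pos hex]
      exact hex.choose_spec
    rw [entropy_def, entropy_def]
    refine Finset.sum_nbij' (fun a => Y (φ a)) (fun b => X (ψ b)) ?_ ?_ ?_ ?_ ?_
    · intro a _
      exact Finset.mem_image_of_mem Y (Finset.mem_univ (φ a))
    · intro b _
      exact Finset.mem_image_of_mem X (Finset.mem_univ (ψ b))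
    · intro a ha
      show X (ψ (Y (φ a))) = a
      have h1 : Y (ψ (Y (φ a))) = Y (φ a) :=
        hψspec _ (Finset.mem_image_of_mem Y (Finset.mem_univ (φ a)))
      have h2 : X (ψ (Y (φ a))) = X (φ a) := (h _ _).mpr h1
      rw [h2, hφspec a ha]
    · intro b hb
      show Y (φ (X (ψ b))) = b
      have h1 : X (φ (X (ψ b))) = X (ψ b) :=
        hφspec _ (Finset.mem_image_of_mem X (Finset.mem_univ (ψ b)))
      have h2 : Y (φ (X (ψ b))) = Y (ψ b) := (h _ _).mp h1
      rw [h2, hψspec b hb]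
    · intro a ha
      congr 1
      refine Finset.sum_congr ?_ (fun _ _ => rfl)
      ext ω
      simp only [Finset.mem_filter, Finset.mem_univ, true_and]
      constructor
      · intro hx
        exact (h ω (φ a)).mp (hx.trans (hφspec a ha).symm)
      · intro hy
        exact ((h ω (φ a)).mpr hy).trans (hφspec a ha)

-- entropy is invariant under reindexing the sample space by an equivalence
lemma entropy_comp_equiv {Ω Ω' S : Type} [Fintype Ω] [Fintype Ω'] (p : Ω → ℝ) (X : Ω → S)
    (σ : Ω' ≃ Ω) : entropy (fun ω' => p (σ ω')) (fun ω' => X (σ ω')) = entropy p X := by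
  classical
  rw [entropy_def, entropy_def]
  have himg : Finset.univ.image (fun ω' => X (σ ω')) = Finset.univ.image X := by
    rw [show (fun ω' => X (σ ω')) = X ∘ σ from rfl, ← Finset.image_image,
      Finset.image_univ_equiv]
  rw [himg]
  refine Finset.sum_congr rfl (fun s _ => ?_)
  congr 1
  refine Finset.sum_equiv σ (fun ω' => ?_) (fun _ _ => rfl)
  simp

-- entropy of a masked identity on a product pmf
lemma entropy_masked {t M : ℕ} (Q : Fin t → Fin (M+1) → ℝ)
    (hQ1 : ∀ v, ∑ x, Q v x = 1) (b : Fin t → Prop) [DecidablePred b] :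
    entropy (fun f : Fin t → Fin (M+1) => ∏ v, Q v (f v))
        (fun f => fun v : Fin t => if b v then some (f v) else none)
      = ∑ v, if b v then ∑ x, Real.negMulLog (Q v x) else 0 := by
  classical
  set r : Fin t → Option (Fin (M+1)) → ℝ := fun v y =>
    if b v then y.elim 0 (Q v) else (if y = none then 1 else 0) with hr
  have hr1 : ∀ v, ∑ y : Option (Fin (M+1)), r v y = 1 := by
    intro v
    by_cases hb : b v
    · rw [Fintype.sum_option]
      simp [hr, hb, hQ1 v]
    · rw [Fintype.sum_option]
      simp [hr, hb]
  have hmass : ∀ g : Fin t → Option (Fin (M+1)),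
      (∑ f ∈ Finset.univ.filter
          (fun f : Fin t → Fin (M+1) =>
            (fun v : Fin t => if b v then some (f v) else none) = g),
        ∏ v, Q v (f v)) = ∏ v, r v (g v) := by
    intro g
    rw [Finset.sum_filter]
    have step1 : ∀ f : Fin t → Fin (M+1),
        (if (fun v : Fin t => if b v then some (f v) else none) = g
          then ∏ v, Q v (f v) else 0)
        = ∏ v, (if (if b v then some (f v) else none) = g v then Q v (f v) else 0) := by
      intro f
      rw [prod_ite_all (fun v => (if b v then some (f v) else none) = g v) (fun v => Q v (f v))]
      congr 1
      simp [funext_iff]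
    rw [Finset.sum_congr rfl (fun f _ => step1 f),
      ← Fintype.prod_sum (fun (v : Fin t) (x : Fin (M+1)) =>
        if (if b v then some x else none) = g v then Q v x else 0)]
    refine Finset.prod_congr rfl (fun v _ => ?_)
    by_cases hb : b v
    · cases hg : g v with
      | none => simp [hr, hb, hg]
      | some i =>
        simp [hr, hb, hg]
    · cases hg : g v with
      | none => simp [hr, hb, hg, hQ1 v]
      | some i => simp [hr, hb, hg]
  rw [entropy_eq_sum_fintype]
  calc ∑ g : Fin t → Option (Fin (M+1)), Real.negMulLog
          (∑ f ∈ Finset.univ.filter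
            (fun f : Fin t → Fin (M+1) =>
              (fun v : Fin t => if b v then some (f v) else none) = g),
            ∏ v, Q v (f v))
      = ∑ g : Fin t → Option (Fin (M+1)), Real.negMulLog (∏ v, r v (g v)) := by
        exact Finset.sum_congr rfl (fun g _ => by rw [hmass g])
    _ = ∑ v, ∑ y : Option (Fin (M+1)), Real.negMulLog (r v y) := key_sum t r hr1
    _ = ∑ v, if b v then ∑ x, Real.negMulLog (Q v x) else 0 := by
        refine Finset.sum_congr rfl (fun v _ => ?_)
        by_cases hb : b v
        · rw [if_pos hb, Fintype.sum_option]
          simp [hr, hb]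
        · rw [if_neg hb, Fintype.sum_option]
          simp [hr, hb]

lemma aux_entropic {n : ℕ} {E : Type} [Fintype E] (h : E → ℝ) (c : Fin n → E → Prop)
    [∀ k u, Decidable (c k u)] (hh : ∀ u, 0 ≤ h u) :
    ∃ (N : ℕ) (S : Type) (p : Fin N → ℝ) (X : Fin n → Fin N → S),
      IsPMF p ∧ ∀ A : Finset (Fin n),
        entropy p (fun ω => fun i : A => X i.1 ω)
          = ∑ u : E, if (∃ i ∈ A, c i u) then h u else 0 := by
  classical
  set B : ℝ := ∑ u : E, h u with hB
  have hBleq : ∀ u : E, h u ≤ B := fun u =>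
    Finset.single_le_sum (fun v _ => hh v) (Finset.mem_univ u)
  set M : ℕ := ⌈Real.exp B⌉₊ with hM
  have hlogB : B ≤ Real.log ((M : ℝ) + 1) := by
    rw [Real.le_log_iff_exp_le (by positivity)]
    calc Real.exp B ≤ (⌈Real.exp B⌉₊ : ℝ) := Nat.le_ceil _
      _ ≤ (M : ℝ) + 1 := by rw [hM]; linarith
  choose q hq0 hq1 hqH using fun u : E =>
    exists_pmf_entropy M (h u) (hh u) ((hBleq u).trans (by exact_mod_cast hlogB))
  set t : ℕ := Fintype.card E with ht
  set e : E ≃ Fin t := Fintype.equivFin E with he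
  set Q : Fin t → Fin (M+1) → ℝ := fun v => q (e.symm v) with hQ
  set p' : (Fin t → Fin (M+1)) → ℝ := fun f => ∏ v, Q v (f v) with hp'
  set N : ℕ := Fintype.card (Fin t → Fin (M+1)) with hN
  set e2 : Fin N ≃ (Fin t → Fin (M+1)) := (Fintype.equivFin _).symm with he2
  refine ⟨N, E → Option (Fin (M+1)), fun ω => p' (e2 ω),
    fun k ω u => if c k u then some (e2 ω (e u)) else none, ⟨?_, ?_⟩, ?_⟩
  · intro ω
    exact Finset.prod_nonneg (fun v _ => hq0 _ _)
  · rw [Equiv.sum_comp e2 p']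
    show (∑ f : Fin t → Fin (M+1), ∏ v, Q v (f v)) = 1
    rw [← Fintype.prod_sum Q]
    exact Finset.prod_eq_one (fun v _ => hq1 _)
  · intro A
    have hfib : ∀ f f' : Fin t → Fin (M+1),
        ((fun i : A => fun u : E => if c i.1 u then some (f (e u)) else none)
          = (fun i : A => fun u : E => if c i.1 u then some (f' (e u)) else none))
        ↔ ((fun v : Fin t => if (∃ i ∈ A, c i (e.symm v)) then some (f v) else none)
          = (fun v : Fin t => if (∃ i ∈ A, c i (e.symm v)) then some (f' v) else none)) := by
      intro f f'
      constructor
      · intro hJ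
        funext v
        by_cases hb : ∃ i ∈ A, c i (e.symm v)
        · rw [if_pos hb, if_pos hb]
          obtain ⟨i, hi, hci⟩ := hb
          have h2 := congrFun (congrFun hJ ⟨i, hi⟩) (e.symm v)
          simp only [hci, if_true, Equiv.apply_symm_apply] at h2
          rw [h2]
        · rw [if_neg hb, if_neg hb]
      · intro hY
        funext i u
        by_cases hci : c i.1 u
        · rw [if_pos hci, if_pos hci]
          have h2 := congrFun hY (e u)
          simp only [Equiv.symm_apply_apply] at h2
          rw [if_pos ⟨i.1, i.2, hci⟩, if_pos ⟨i.1, i.2, hci⟩] at h2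
          rw [h2]
        · rw [if_neg hci, if_neg hci]
    have step1 := entropy_comp_equiv p'
      (fun f => fun i : A => fun u : E => if c i.1 u then some (f (e u)) else none) e2
    have step2 := entropy_congr p'
      (fun f : Fin t → Fin (M+1) =>
        fun i : A => fun u : E => if c i.1 u then some (f (e u)) else none)
      (fun f : Fin t → Fin (M+1) =>
        fun v : Fin t => if (∃ i ∈ A, c i (e.symm v)) then some (f v) else none)
      hfib
    have step3 := entropy_masked Q (fun v => hq1 (e.symm v))
      (fun v : Fin t => ∃ i ∈ A, c i (e.symm v))
    have step4 : (∑ v : Fin t,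
          if (∃ i ∈ A, c i (e.symm v)) then ∑ x, Real.negMulLog (Q v x) else 0)
        = ∑ u : E, if (∃ i ∈ A, c i u) then h u else 0 := by
      calc (∑ v : Fin t,
              if (∃ i ∈ A, c i (e.symm v)) then ∑ x, Real.negMulLog (Q v x) else 0)
          = ∑ v : Fin t, (if (∃ i ∈ A, c i (e.symm v)) then h (e.symm v) else 0) := by
            refine Finset.sum_congr rfl (fun v _ => ?_)
            rw [show (∑ x, Real.negMulLog (Q v x)) = h (e.symm v) from hqH (e.symm v)]
        _ = ∑ u : E, if (∃ i ∈ A, c i u) then h u else 0 :=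
            Equiv.sum_comp e.symm (fun u => if (∃ i ∈ A, c i u) then h u else 0)
    exact step1.trans (step2.trans (step3.trans step4))

/-- The monotone graph-cut function
with `λ ∈ [0, 1/2]` is entropic. -/
theorem monotone_graph_cut_is_entropic {n : ℕ}
    (s : Fin n → Fin n → ℝ) (hsym : ∀ i j, s i j = s j i)
    (hnn : ∀ i j, 0 ≤ s i j) (hdiag : ∀ i, s i i = 0)
    (lam : ℝ) (hlam0 : 0 ≤ lam) (hlam2 : lam ≤ 1 / 2) :
    IsEntropic (fun A : Finset (Fin n) =>
      (∑ i ∈ A, ∑ j : Fin n, s i j) - lam * ∑ i ∈ A, ∑ j ∈ A, s i j) := by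
  classical
  obtain ⟨N, S, p, X, hpmf, hent⟩ := aux_entropic
    (E := (Fin n × Fin n) ⊕ (Fin n × Fin n))
    (Sum.elim (fun ij => lam * s ij.1 ij.2) (fun ij => (1 - 2*lam) * s ij.1 ij.2))
    (fun k => Sum.elim (fun ij => k = ij.1 ∨ k = ij.2) (fun ij => k = ij.1))
    (by rintro (⟨i,j⟩|⟨i,j⟩)
        · exact mul_nonneg hlam0 (hnn i j)
        · exact mul_nonneg (by linarith) (hnn i j))
  refine ⟨N, S, p, X, hpmf, fun A => ?_⟩
  rw [hent A]
  show (∑ i ∈ A, ∑ j, s i j) - lam * ∑ i ∈ A, ∑ j ∈ A, s i j = _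
  rw [Fintype.sum_sum_type]
  simp only [Sum.elim_inl, Sum.elim_inr]
  rw [Fintype.sum_prod_type, Fintype.sum_prod_type]
  have hcond1 : ∀ i j : Fin n, (∃ k ∈ A, k = i ∨ k = j) ↔ (i ∈ A ∨ j ∈ A) := by
    intro i j
    constructor
    · rintro ⟨k, hk, rfl | rfl⟩
      exacts [Or.inl hk, Or.inr hk]
    · rintro (hi | hj)
      exacts [⟨i, hi, Or.inl rfl⟩, ⟨j, hj, Or.inr rfl⟩]
  have hcond2 : ∀ i : Fin n, (∃ k ∈ A, k = i) ↔ i ∈ A := by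
    intro i
    constructor
    · rintro ⟨k, hk, rfl⟩
      exact hk
    · intro hi
      exact ⟨i, hi, rfl⟩
  simp only [hcond1, hcond2]
  have memsum : ∀ (F : Fin n → ℝ), (∑ i, if i ∈ A then F i else 0) = ∑ i ∈ A, F i := by
    intro F
    rw [Finset.sum_ite_mem, Finset.univ_inter]
  have cgen : ∀ a : ℝ, (∑ i, ∑ j, if i ∈ A then a * s i j else 0)
      = a * ∑ i ∈ A, ∑ j, s i j := by
    intro a
    calc (∑ i, ∑ j, if i ∈ A then a * s i j else 0)
        = ∑ i, (if i ∈ A then ∑ j, a * s i j else 0) :=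
          Finset.sum_congr rfl (fun i _ => by by_cases hi : i ∈ A <;> simp [hi])
      _ = ∑ i ∈ A, ∑ j, a * s i j := memsum _
      _ = a * ∑ i ∈ A, ∑ j, s i j := by
          rw [Finset.mul_sum]
          exact Finset.sum_congr rfl (fun i _ => (Finset.mul_sum _ _ _).symm)
  have c2 : (∑ i, ∑ j, if j ∈ A then lam * s i j else 0) = lam * ∑ i ∈ A, ∑ j, s i j := by
    rw [Finset.sum_comm]
    calc (∑ j, ∑ i, if j ∈ A then lam * s i j else 0)
        = ∑ j, ∑ i, (if j ∈ A then lam * s j i else 0) :=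
          Finset.sum_congr rfl (fun j _ => Finset.sum_congr rfl (fun i _ => by rw [hsym i j]))
      _ = lam * ∑ i ∈ A, ∑ j, s i j := cgen lam
  have c3 : (∑ i, ∑ j, if i ∈ A then (if j ∈ A then lam * s i j else 0) else 0)
      = lam * ∑ i ∈ A, ∑ j ∈ A, s i j := by
    calc (∑ i, ∑ j, if i ∈ A then (if j ∈ A then lam * s i j else 0) else 0)
        = ∑ i, (if i ∈ A then ∑ j, (if j ∈ A then lam * s i j else 0) else 0) :=
          Finset.sum_congr rfl (fun i _ => by by_cases hi : i ∈ A <;> simp [hi])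
      _ = ∑ i ∈ A, ∑ j, (if j ∈ A then lam * s i j else 0) := memsum _
      _ = ∑ i ∈ A, ∑ j ∈ A, lam * s i j :=
          Finset.sum_congr rfl (fun i _ => memsum _)
      _ = lam * ∑ i ∈ A, ∑ j ∈ A, s i j := by
          rw [Finset.mul_sum]
          exact Finset.sum_congr rfl (fun i _ => (Finset.mul_sum _ _ _).symm)
  have split : ∀ i j : Fin n, (if i ∈ A ∨ j ∈ A then lam * s i j else 0)
      = (if i ∈ A then lam * s i j else 0) + (if j ∈ A then lam * s i j else 0)
        - (if i ∈ A then (if j ∈ A then lam * s i j else 0) else 0) := by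
    intro i j
    by_cases hi : i ∈ A <;> by_cases hj : j ∈ A <;> simp [hi, hj]
  rw [Finset.sum_congr rfl (fun i _ => Finset.sum_congr rfl (fun j _ => split i j))]
  simp only [Finset.sum_add_distrib, Finset.sum_sub_distrib]
  rw [cgen lam, c2, c3, cgen (1 - 2*lam)]
  ring
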